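/- Let H be a real Hilbert space, let D ⊆ H be a closed convex set contained in the closed ball of radius λ centered at the origin, and suppose the closed ball of radius δ > 0 centered at h° ∈ D is contained in D. Consider the conditional gradient iterates with exact line search: starting from h₁ ∈ D, for j = 1, …, p choose s_j ∈ D with ⟨s_j, h_j − h°⟩ = min_{s ∈ D} ⟨s, h_j − h°⟩, set η_j := min{ ⟨h_j − h°, h_j − s_j⟩ / ‖h_j − s_j‖², 1 } (with η_j := 1 if h_j = s_j), and h_{j+1} := h_j + η_j (s_j − h_j). Then the objective converges linearly: (1/2) ‖h_p − h°‖² ≤ 4λ² exp( − p δ² / (4λ²) ). -/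

import Mathlib

open scoped Classical

local notation "⟪" x ", " y "⟫" => @inner ℝ _ _ x y

set_option maxHeartbeats 1600000 in
/-- **Linear convergence `O(e^{-p})` of the conditional gradient with exact line search
when the optimum lies in the strict interior.** Let `D` be a closed convex subset of the
closed ball of radius `lam` centered at the origin of a real Hilbert space, and assume the
closed ball of radius `δ > 0` centered at `h° ∈ D` is contained in `D`.  The conditional
gradient iterates for `J(h) = (1/2)‖h − h°‖²` start at `h 1 ∈ D` and, for `j = 1, 2, …`,
pick a vertex `s j ∈ D` minimizing `s ↦ ⟪s, h j − h°⟫` over `D`, the exact line-search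
step size `η_j = min{⟪h j − h°, h j − s j⟫/‖h j − s j‖², 1}` (with `η_j = 1` when
`h j = s j`), and update `h (j+1) = h j + η_j • (s j − h j)`.  Then the objective
converges linearly: `(1/2)‖h p − h°‖² ≤ 4 lam² exp(−p δ²/(4 lam²))`. -/
theorem stmt_12 {H : Type*} [NormedAddCommGroup H] [InnerProductSpace ℝ H] [CompleteSpace H]
    (D : Set H) (hDconv : Convex ℝ D) (hDcl : IsClosed D)
    (lam δ : ℝ) (hδ : 0 < δ)
    (hDball : D ⊆ Metric.closedBall (0 : H) lam)
    (ho : H) (hho : ho ∈ D) (hint : Metric.closedBall ho δ ⊆ D)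
    (h s : ℕ → H) (η : ℕ → ℝ) (hinit : h 1 ∈ D)
    (hsD : ∀ j, 1 ≤ j → s j ∈ D)
    (hsmin : ∀ j, 1 ≤ j → ∀ u ∈ D, ⟪s j, h j - ho⟫ ≤ ⟪u, h j - ho⟫)
    (hη : ∀ j, 1 ≤ j → η j =
      if h j = s j then 1 else min (⟪h j - ho, h j - s j⟫ / ‖h j - s j‖ ^ 2) 1)
    (hupd : ∀ j, 1 ≤ j → h (j + 1) = h j + η j • (s j - h j))
    (p : ℕ) (hp : 1 ≤ p) :
    (1 / 2 : ℝ) * ‖h p - ho‖ ^ 2 ≤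
      4 * lam ^ 2 * Real.exp (-(p : ℝ) * δ ^ 2 / (4 * lam ^ 2)) := by
  rcases subsingleton_or_nontrivial H with hsub | hnt
  · have h0 : h p - ho = (0 : H) := Subsingleton.elim _ _
    rw [h0, norm_zero]
    have hpos : (0:ℝ) ≤ 4 * lam ^ 2 * Real.exp (-(p : ℝ) * δ ^ 2 / (4 * lam ^ 2)) := by
      positivity
    simpa using hpos
  -- Nontrivial case
  obtain ⟨x, hx⟩ := exists_ne (0 : H)
  have hxnorm : (0:ℝ) < ‖x‖ := norm_pos_iff.mpr hx
  set e : H := ‖x‖⁻¹ • x with he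
  have hene : ‖e‖ = 1 := by
    rw [he, norm_smul, norm_inv, norm_norm, inv_mul_cancel₀ hxnorm.ne']
  have hu1 : ho + δ • e ∈ D := hint (by
    rw [Metric.mem_closedBall, dist_eq_norm]
    simp [norm_smul, hene, abs_of_pos hδ])
  have hu2 : ho - δ • e ∈ D := hint (by
    rw [Metric.mem_closedBall, dist_eq_norm]
    simp [norm_smul, hene, abs_of_pos hδ])
  have hlam1 : ‖ho + δ • e‖ ≤ lam := by
    simpa [dist_zero_right] using hDball hu1
  have hlam2 : ‖ho - δ • e‖ ≤ lam := by
    simpa [dist_zero_right] using hDball hu2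
  have hdlam : δ ≤ lam := by
    have h2 : ‖(ho + δ • e) - (ho - δ • e)‖ = 2 * δ := by
      have hmod : (ho + δ • e) - (ho - δ • e) = (2*δ) • e := by module
      rw [hmod, norm_smul, hene, mul_one, Real.norm_eq_abs, abs_of_pos (by linarith)]
    have h3 := norm_sub_le (ho + δ • e) (ho - δ • e)
    linarith
  have hlampos : 0 < lam := lt_of_lt_of_le hδ hdlam
  set c : ℝ := δ^2 / (4 * lam^2) with hc
  have hc0 : 0 < c := by positivity
  have hc14 : c ≤ 1/4 := by
    rw [hc, div_le_iff₀ (by positivity)]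
    nlinarith
  have h1c : (0:ℝ) ≤ 1 - c := by linarith
  -- gap lower bound
  have hgap : ∀ j, 1 ≤ j →
      ‖h j - ho‖^2 + δ * ‖h j - ho‖ ≤ ⟪h j - ho, h j - s j⟫ := by
    intro j hj
    by_cases heq : h j = ho
    · simp [heq]
    · set r : ℝ := ‖h j - ho‖ with hr
      have hrpos : 0 < r := by
        rw [hr]; exact norm_pos_iff.mpr (sub_ne_zero.mpr heq)
      set u : H := ho - (δ / r) • (h j - ho) with hudef
      have huD : u ∈ D := hint (by
        rw [Metric.mem_closedBall, dist_eq_norm]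
        have hsub : u - ho = -((δ / r) • (h j - ho)) := by rw [hudef]; abel
        rw [hsub, norm_neg, norm_smul, Real.norm_eq_abs,
          abs_of_pos (div_pos hδ hrpos), ← hr, div_mul_cancel₀ _ hrpos.ne'])
      have hmin := hsmin j hj u huD
      have hexp : ⟪u, h j - ho⟫ = ⟪ho, h j - ho⟫ - (δ / r) * r^2 := by
        rw [hudef, inner_sub_left, real_inner_smul_left,
          real_inner_self_eq_norm_sq, ← hr]
      have hrw : ⟪h j - ho, h j - s j⟫
          = r^2 + (⟪ho, h j - ho⟫ - ⟪s j, h j - ho⟫) := by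
        have hsplit : ⟪h j - ho, h j - s j⟫
            = ⟪h j - ho, h j - ho⟫ + ⟪h j - ho, ho - s j⟫ := by
          rw [← inner_add_right]; congr 1; abel
        rw [hsplit, real_inner_self_eq_norm_sq, ← hr]
        congr 1
        rw [inner_sub_right, real_inner_comm (h j - ho) ho,
          real_inner_comm (h j - ho) (s j)]
      have hδr : (δ / r) * r^2 = δ * r := by field_simp
      rw [hrw]
      rw [hexp, hδr] at hmin
      linarith
  -- step sizes in [0,1]
  have hη01 : ∀ j, 1 ≤ j → 0 ≤ η j ∧ η j ≤ 1 := by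
    intro j hj
    rw [hη j hj]
    split_ifs with heq
    · exact ⟨zero_le_one, le_refl 1⟩
    · have hg : 0 ≤ ⟪h j - ho, h j - s j⟫ :=
        le_trans (by positivity) (hgap j hj)
      exact ⟨le_min (div_nonneg hg (by positivity)) zero_le_one, min_le_right _ _⟩
  -- iterates stay in D
  have hmem : ∀ j, 1 ≤ j → h j ∈ D := by
    intro j hj
    induction j, hj using Nat.le_induction with
    | base => exact hinit
    | succ n hn ih =>
      obtain ⟨h0, h1⟩ := hη01 n hn
      rw [hupd n hn]
      have hrw : h n + η n • (s n - h n) = (1 - η n) • h n + η n • s n := by module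
      rw [hrw]
      exact hDconv ih (hsD n hn) (by linarith) h0 (by ring)
  -- per-step contraction
  have hstep : ∀ j, 1 ≤ j →
      ‖h (j+1) - ho‖^2 ≤ (1 - c) * ‖h j - ho‖^2 := by
    intro j hj
    have hgapj := hgap j hj
    have hDj := hmem j hj
    have hsj := hsD j hj
    have hnormh : ‖h j‖ ≤ lam := by simpa [dist_zero_right] using hDball hDj
    have hnorms : ‖s j‖ ≤ lam := by simpa [dist_zero_right] using hDball hsj
    have hd2lam : ‖h j - s j‖ ≤ 2 * lam := by
      calc ‖h j - s j‖ ≤ ‖h j‖ + ‖s j‖ := norm_sub_le _ _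
      _ ≤ 2 * lam := by linarith
    have hiter : h (j+1) - ho = (h j - ho) - η j • (h j - s j) := by
      rw [hupd j hj]; module
    have hexp : ‖h (j+1) - ho‖^2
        = ‖h j - ho‖^2 - 2 * η j * ⟪h j - ho, h j - s j⟫
          + η j^2 * ‖h j - s j‖^2 := by
      rw [hiter, norm_sub_sq_real, real_inner_smul_right, norm_smul,
        Real.norm_eq_abs, mul_pow, sq_abs]
      ring
    by_cases heq : h j = s j
    · have hg0 : ⟪h j - ho, h j - s j⟫ = (0:ℝ) := by simp [heq]
      rw [hg0] at hgapj
      have ha0 : ‖h j - ho‖ ≤ 0 := by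
        nlinarith [norm_nonneg (h j - ho)]
      have ha0' : ‖h j - ho‖ = 0 := le_antisymm ha0 (norm_nonneg _)
      have hds : ‖h j - s j‖ = 0 := by simp [heq]
      rw [hexp, hg0, ha0', hds]
      ring_nf
      positivity
    · have hdne : h j - s j ≠ 0 := sub_ne_zero.mpr heq
      have hdpos : 0 < ‖h j - s j‖ := norm_pos_iff.mpr hdne
      set g : ℝ := ⟪h j - ho, h j - s j⟫ with hgdef
      set nd : ℝ := ‖h j - s j‖ with hnd
      have hnd0 : nd ≠ 0 := hdpos.ne'
      have hη' : η j = min (g / nd^2) 1 := by rw [hη j hj]; simp [heq, hgdef, hnd]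
      have hgnn : 0 ≤ g := le_trans (by positivity) hgapj
      have hga : δ * ‖h j - ho‖ ≤ g := by
        nlinarith [sq_nonneg ‖h j - ho‖]
      by_cases hcase : g / nd^2 < 1
      · have hηeq : η j = g / nd^2 := by rw [hη', min_eq_left hcase.le]
        have hval : ‖h (j+1) - ho‖^2 = ‖h j - ho‖^2 - g^2 / nd^2 := by
          rw [hexp, hηeq]; field_simp; ring
        rw [hval]
        have hfrac : c * ‖h j - ho‖^2 = (δ^2 * ‖h j - ho‖^2) / (4 * lam^2) := by
          rw [hc]; ring
        have hkey : c * ‖h j - ho‖^2 ≤ g^2 / nd^2 := by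
          rw [hfrac, div_le_div_iff₀ (by positivity) (by positivity)]
          have ht1 : (δ * ‖h j - ho‖) * (δ * ‖h j - ho‖) ≤ g * g :=
            mul_self_le_mul_self (by positivity) hga
          have ht2 : nd^2 ≤ 4 * lam^2 := by nlinarith [hdpos.le]
          nlinarith [ht1, ht2, sq_nonneg g, sq_nonneg nd,
            mul_nonneg (mul_nonneg hδ.le (norm_nonneg (h j - ho)))
              (mul_nonneg hδ.le (norm_nonneg (h j - ho)))]
        linarith
      · push_neg at hcase
        have hηeq : η j = 1 := by rw [hη', min_eq_right hcase]
        have hnd2g : nd^2 ≤ g := by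
          rwa [le_div_iff₀ (by positivity), one_mul] at hcase
        rw [hexp, hηeq]
        nlinarith [mul_nonneg hδ.le (norm_nonneg (h j - ho)),
          mul_nonneg h1c (sq_nonneg ‖h j - ho‖)]
  -- geometric decay
  have hiterate : ∀ j, 1 ≤ j → ‖h j - ho‖^2 ≤ (1 - c)^(j-1) * (2*lam)^2 := by
    intro j hj
    induction j, hj using Nat.le_induction with
    | base =>
      simp only [Nat.sub_self, pow_zero, one_mul]
      have hb : ‖h 1 - ho‖ ≤ 2 * lam := by
        have h1 : ‖h 1‖ ≤ lam := by simpa [dist_zero_right] using hDball hinit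
        have h2 : ‖ho‖ ≤ lam := by simpa [dist_zero_right] using hDball hho
        calc ‖h 1 - ho‖ ≤ ‖h 1‖ + ‖ho‖ := norm_sub_le _ _
        _ ≤ 2*lam := by linarith
      nlinarith [norm_nonneg (h 1 - ho)]
    | succ n hn ih =>
      have hpow : (n + 1 - 1) = (n - 1) + 1 := by omega
      rw [hpow, pow_succ]
      calc ‖h (n+1) - ho‖^2 ≤ (1-c) * ‖h n - ho‖^2 := hstep n hn
      _ ≤ (1-c) * ((1-c)^(n-1) * (2*lam)^2) := mul_le_mul_of_nonneg_left ih h1c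
      _ = (1-c)^(n-1) * (1-c) * (2*lam)^2 := by ring
  have hfin := hiterate p hp
  -- exponential bound
  have e1 : (1-c)^(p-1) ≤ Real.exp c * Real.exp (-(c*(p:ℝ))) := by
    have t1 : (1-c)^(p-1) ≤ (Real.exp (-c))^(p-1) :=
      pow_le_pow_left₀ h1c (by linarith [Real.add_one_le_exp (-c)]) _
    have t3 : (((p-1:ℕ)):ℝ) = (p:ℝ) - 1 := by
      rw [Nat.cast_sub hp, Nat.cast_one]
    calc (1-c)^(p-1) ≤ (Real.exp (-c))^(p-1) := t1
    _ = Real.exp (((p-1:ℕ):ℝ) * (-c)) := (Real.exp_nat_mul _ _).symm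
    _ = Real.exp c * Real.exp (-(c*(p:ℝ))) := by
        rw [← Real.exp_add, t3]; congr 1; ring
  have hec : Real.exp c ≤ 2 := by
    have h1 : Real.exp c ≤ Real.exp (1/4 : ℝ) := Real.exp_le_exp.mpr hc14
    have h2 : Real.exp (1/4 : ℝ) < 2 := by
      rw [show (2:ℝ) = Real.exp (Real.log 2) by rw [Real.exp_log]; norm_num]
      exact Real.exp_lt_exp.mpr (by linarith [Real.log_two_gt_d9])
    linarith
  have hexppos : 0 < Real.exp (-(c*(p:ℝ))) := Real.exp_pos _
  have hargeq : -(c*(p:ℝ)) = -(p:ℝ) * δ^2 / (4 * lam^2) := by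
    rw [hc]; ring
  calc (1/2:ℝ) * ‖h p - ho‖^2
      ≤ (1/2) * ((1-c)^(p-1) * (2*lam)^2) := by linarith
    _ ≤ (1/2) * ((Real.exp c * Real.exp (-(c*(p:ℝ)))) * (2*lam)^2) := by
        have := mul_le_mul_of_nonneg_right e1 (by positivity : (0:ℝ) ≤ (2*lam)^2)
        linarith
    _ ≤ 4 * lam^2 * Real.exp (-(c*(p:ℝ))) := by
        nlinarith [mul_nonneg (mul_nonneg (sub_nonneg.mpr hec) hexppos.le)
          (sq_nonneg lam)]
    _ = 4 * lam ^ 2 * Real.exp (-(p : ℝ) * δ ^ 2 / (4 * lam ^ 2)) := by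
        rw [hargeq]
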